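/- Under conditions (C1): λ_{ij}θ_i = λ_{ji}θ_j and α_{ij}θ_i = α_{ji}θ_j for all i,j; (C3): the matrix F (with F_{ii} = θ_i^{-1} + (1/4)Σ_j λ_{ij}α_{ij}θ_j^{-1} and F_{ij} = (1/4)Σ_r λ_{ir}α_{jr}θ_r^{-1} for i≠j) is symmetric with F_{11} = F_{22} = F_{33}; then at every point (q,p) of ℝ⁶ with Y(q,p) ≠ 0 at which condition (C2) holds (q'_i λ_{κj}θ_i = q'_j λ_{κi}θ_j, q'_i α_{κi}θ_j = −q'_j α_{κj}θ_i, p'_i α_{κj}θ_i = p'_j α_{κi}θ_j, p'_i λ_{κi}θ_j = −p'_j λ_{κj}θ_i for all i,j,κ ∈ {1,2,3}), each component L'_i of the angular momentum L' = q'×p' Poisson-commutes with the Hamiltonian: {H', L'_i}_nc = 0 at that point, for i = 1,2,3. -/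

import Mathlib

open scoped BigOperators

/-- Phase space ℝ⁶ = {(q, p)} with q, p : Fin 3 → ℝ. -/
abbrev PhaseSpace := (Fin 3 → ℝ) × (Fin 3 → ℝ)

/-- Partial derivative of `f` with respect to the position coordinate `q_ν`. -/
noncomputable def pdQ (f : PhaseSpace → ℝ) (ν : Fin 3) (z : PhaseSpace) : ℝ :=
  fderiv ℝ f z (Pi.single ν 1, 0)

/-- Partial derivative of `f` with respect to the momentum coordinate `p_ν`. -/
noncomputable def pdP (f : PhaseSpace → ℝ) (ν : Fin 3) (z : PhaseSpace) : ℝ :=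
  fderiv ℝ f z (0, Pi.single ν 1)

/-- Noncommutative Poisson bracket
`{f,g}_nc = Σ_ν θ_ν⁻¹ (∂f/∂p_ν ∂g/∂q_ν − ∂f/∂q_ν ∂g/∂p_ν)`. -/
noncomputable def ncBracket (θ : Fin 3 → ℝ) (f g : PhaseSpace → ℝ) (z : PhaseSpace) : ℝ :=
  ∑ ν : Fin 3, (θ ν)⁻¹ * (pdP f ν z * pdQ g ν z - pdQ f ν z * pdP g ν z)

/-- Transformed position coordinate `q'_i = q_i − (1/2) Σ_j α_{ij} p_j`. -/
noncomputable def qNC (α : Matrix (Fin 3) (Fin 3) ℝ) (i : Fin 3) (z : PhaseSpace) : ℝ :=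
  z.1 i - (1/2) * ∑ j : Fin 3, α i j * z.2 j

/-- Transformed momentum coordinate `p'_i = p_i + (1/2) Σ_j λ_{ij} q_j`. -/
noncomputable def pNC (lam : Matrix (Fin 3) (Fin 3) ℝ) (i : Fin 3) (z : PhaseSpace) : ℝ :=
  z.2 i + (1/2) * ∑ j : Fin 3, lam i j * z.1 j

/-- `θ_ν = 1 + (1/4) Σ_μ λ_{μν} α_{μν}`. -/
noncomputable def θnc (α lam : Matrix (Fin 3) (Fin 3) ℝ) (ν : Fin 3) : ℝ :=
  1 + (1/4) * ∑ μ : Fin 3, lam μ ν * α μ ν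

/-- `F_{ii} = θ_i⁻¹ + (1/4) Σ_j λ_{ij} α_{ij} θ_j⁻¹` and
`F_{ij} = (1/4) Σ_r λ_{ir} α_{jr} θ_r⁻¹` for `i ≠ j`. -/
noncomputable def Fnc (α lam : Matrix (Fin 3) (Fin 3) ℝ) (i j : Fin 3) : ℝ :=
  if i = j then (θnc α lam i)⁻¹ + (1/4) * ∑ r : Fin 3, lam i r * α i r * (θnc α lam r)⁻¹
  else (1/4) * ∑ r : Fin 3, lam i r * α j r * (θnc α lam r)⁻¹

/-- Levi-Civita symbol `ε_{ijh} = (1/2)(i−j)(j−h)(h−i)`. -/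
noncomputable def eps (i j h : Fin 3) : ℝ :=
  (1/2) * ((i.1 : ℝ) - (j.1 : ℝ)) * ((j.1 : ℝ) - (h.1 : ℝ)) * ((h.1 : ℝ) - (i.1 : ℝ))

/-- Angular momentum `L' = q' × p'`, componentwise `L'_i = Σ_{j,h} ε_{ijh} q'_j p'_h`. -/
noncomputable def Lnc (α lam : Matrix (Fin 3) (Fin 3) ℝ) (i : Fin 3) (z : PhaseSpace) : ℝ :=
  ∑ j : Fin 3, ∑ h : Fin 3, eps i j h * qNC α j z * pNC lam h z

/-- `Y = (Σ_i (q'_i)²)^{1/2}`, the Euclidean norm of `q'`. -/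
noncomputable def Ync (α : Matrix (Fin 3) (Fin 3) ℝ) (z : PhaseSpace) : ℝ :=
  Real.sqrt (∑ i : Fin 3, (qNC α i z) ^ 2)

/-- Noncommutative Kepler Hamiltonian `H' = (1/(2m)) Σ_i (p'_i)² − k/Y`. -/
noncomputable def Hnc (α lam : Matrix (Fin 3) (Fin 3) ℝ) (m k : ℝ) (z : PhaseSpace) : ℝ :=
  (1 / (2 * m)) * ∑ i : Fin 3, (pNC lam i z) ^ 2 - k / Ync α z

/-- Laplace–Runge–Lenz vector `A' = p' × L' − mk q'/Y`. -/
noncomputable def Anc (α lam : Matrix (Fin 3) (Fin 3) ℝ) (m k : ℝ) (i : Fin 3)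
    (z : PhaseSpace) : ℝ :=
  (∑ j : Fin 3, ∑ h : Fin 3, eps i j h * pNC lam j z * Lnc α lam h z)
    - m * k * qNC α i z / Ync α z

/-- Condition (C1): `λ_{ij} θ_i = λ_{ji} θ_j` and `α_{ij} θ_i = α_{ji} θ_j` for all `i, j`. -/
def CondC1 (α lam : Matrix (Fin 3) (Fin 3) ℝ) : Prop :=
  ∀ i j : Fin 3, lam i j * θnc α lam i = lam j i * θnc α lam j ∧
    α i j * θnc α lam i = α j i * θnc α lam j

/-- Condition (C2), holding at the point `z`: for all `i, j, κ`,
`q'_i λ_{κj} θ_i = q'_j λ_{κi} θ_j`, `q'_i α_{κi} θ_j = −q'_j α_{κj} θ_i`,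
`p'_i α_{κj} θ_i = p'_j α_{κi} θ_j`, `p'_i λ_{κi} θ_j = −p'_j λ_{κj} θ_i`. -/
def CondC2 (α lam : Matrix (Fin 3) (Fin 3) ℝ) (z : PhaseSpace) : Prop :=
  ∀ i j κ : Fin 3,
    qNC α i z * lam κ j * θnc α lam i = qNC α j z * lam κ i * θnc α lam j ∧
    qNC α i z * α κ i * θnc α lam j = -(qNC α j z * α κ j * θnc α lam i) ∧
    pNC lam i z * α κ j * θnc α lam i = pNC lam j z * α κ i * θnc α lam j ∧
    pNC lam i z * lam κ i * θnc α lam j = -(pNC lam j z * lam κ j * θnc α lam i)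

/-- Condition (C3): the matrix `F` is symmetric with `F_{11} = F_{22} = F_{33}`. -/
def CondC3 (α lam : Matrix (Fin 3) (Fin 3) ℝ) : Prop :=
  (∀ i j : Fin 3, Fnc α lam i j = Fnc α lam j i) ∧
    Fnc α lam 0 0 = Fnc α lam 1 1 ∧ Fnc α lam 1 1 = Fnc α lam 2 2

/-- Scaled Runge–Lenz–Pauli vector on negative energies: `Γ̂'⁻ = A'/(−2mH')^{1/2}`. -/
noncomputable def GamMinus (α lam : Matrix (Fin 3) (Fin 3) ℝ) (m k : ℝ) (i : Fin 3)
    (z : PhaseSpace) : ℝ :=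
  Anc α lam m k i z / Real.sqrt (-(2 * m * Hnc α lam m k z))

/-- Scaled Runge–Lenz–Pauli vector on positive energies: `Γ̂'⁺ = A'/(2mH')^{1/2}`. -/
noncomputable def GamPlus (α lam : Matrix (Fin 3) (Fin 3) ℝ) (m k : ℝ) (i : Fin 3)
    (z : PhaseSpace) : ℝ :=
  Anc α lam m k i z / Real.sqrt (2 * m * Hnc α lam m k z)

section Aux
open ContinuousLinearMap

variable (α lam : Matrix (Fin 3) (Fin 3) ℝ)

noncomputable def Cq (i : Fin 3) : PhaseSpace →L[ℝ] ℝ :=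
  (proj i).comp (fst ℝ (Fin 3 → ℝ) (Fin 3 → ℝ))
    - (1/2 : ℝ) • ∑ j : Fin 3, α i j • ((proj j).comp (snd ℝ (Fin 3 → ℝ) (Fin 3 → ℝ)))

noncomputable def Cp (i : Fin 3) : PhaseSpace →L[ℝ] ℝ :=
  (proj i).comp (snd ℝ (Fin 3 → ℝ) (Fin 3 → ℝ))
    + (1/2 : ℝ) • ∑ j : Fin 3, lam i j • ((proj j).comp (fst ℝ (Fin 3 → ℝ) (Fin 3 → ℝ)))

lemma Cq_apply (i : Fin 3) (v : PhaseSpace) :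
    Cq α i v = v.1 i - (1/2) * ∑ j : Fin 3, α i j * v.2 j := by
  simp [Cq, ContinuousLinearMap.sum_apply, Finset.mul_sum]

lemma Cp_apply (i : Fin 3) (v : PhaseSpace) :
    Cp lam i v = v.2 i + (1/2) * ∑ j : Fin 3, lam i j * v.1 j := by
  simp [Cp, ContinuousLinearMap.sum_apply, Finset.mul_sum]

lemma hasF_q (i : Fin 3) (z : PhaseSpace) : HasFDerivAt (qNC α i) (Cq α i) z := by
  have h : qNC α i = fun v => Cq α i v := by
    funext v; rw [Cq_apply]; rfl
  rw [h]; exact (Cq α i).hasFDerivAt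

lemma hasF_p (i : Fin 3) (z : PhaseSpace) : HasFDerivAt (pNC lam i) (Cp lam i) z := by
  have h : pNC lam i = fun v => Cp lam i v := by
    funext v; rw [Cp_apply]; rfl
  rw [h]; exact (Cp lam i).hasFDerivAt

lemma Cq_dq (i ν : Fin 3) : Cq α i (Pi.single ν 1, 0) = if i = ν then 1 else 0 := by
  rw [Cq_apply]; simp [Pi.single_apply]

lemma Cq_dp (i ν : Fin 3) : Cq α i (0, Pi.single ν 1) = -(1/2) * α i ν := by
  rw [Cq_apply]; simp [Pi.single_apply, mul_ite, Finset.sum_ite_eq']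

lemma Cp_dq (i ν : Fin 3) : Cp lam i (Pi.single ν 1, 0) = (1/2) * lam i ν := by
  rw [Cp_apply]; simp [Pi.single_apply, mul_ite, Finset.sum_ite_eq']

lemma Cp_dp (i ν : Fin 3) : Cp lam i (0, Pi.single ν 1) = if i = ν then 1 else 0 := by
  rw [Cp_apply]; simp [Pi.single_apply]

end Aux
section Aux2
variable (α lam : Matrix (Fin 3) (Fin 3) ℝ)

noncomputable def CL (i : Fin 3) (z : PhaseSpace) : PhaseSpace →L[ℝ] ℝ :=
  ∑ j : Fin 3, ∑ h : Fin 3,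
    ((eps i j h * qNC α j z) • Cp lam h + pNC lam h z • (eps i j h • Cq α j))

lemma hasF_L (i : Fin 3) (z : PhaseSpace) :
    HasFDerivAt (Lnc α lam i) (CL α lam i z) z := by
  unfold Lnc CL
  apply HasFDerivAt.fun_sum
  intro j _
  apply HasFDerivAt.fun_sum
  intro h _
  exact ((hasF_q α j z).const_mul (eps i j h)).mul (hasF_p lam h z)

lemma pdQ_L (i ν : Fin 3) (z : PhaseSpace) :
    pdQ (Lnc α lam i) ν z =
      (∑ h : Fin 3, eps i ν h * pNC lam h z)
        + (1/2) * ∑ j : Fin 3, ∑ h : Fin 3, eps i j h * qNC α j z * lam h ν := by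
  rw [pdQ, (hasF_L α lam i z).fderiv]
  simp only [CL, ContinuousLinearMap.sum_apply, ContinuousLinearMap.add_apply,
    ContinuousLinearMap.smul_apply, Cq_dq, Cp_dq, smul_eq_mul]
  fin_cases ν <;> simp [Fin.sum_univ_three] <;> ring

lemma pdP_L (i ν : Fin 3) (z : PhaseSpace) :
    pdP (Lnc α lam i) ν z =
      (∑ j : Fin 3, eps i j ν * qNC α j z)
        - (1/2) * ∑ j : Fin 3, ∑ h : Fin 3, eps i j h * α j ν * pNC lam h z := by
  rw [pdP, (hasF_L α lam i z).fderiv]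
  simp only [CL, ContinuousLinearMap.sum_apply, ContinuousLinearMap.add_apply,
    ContinuousLinearMap.smul_apply, Cq_dp, Cp_dp, smul_eq_mul]
  fin_cases ν <;> simp [Fin.sum_univ_three] <;> ring

end Aux2
section Aux3
variable (α lam : Matrix (Fin 3) (Fin 3) ℝ)

noncomputable def CS (z : PhaseSpace) : PhaseSpace →L[ℝ] ℝ :=
  ∑ i : Fin 3, ((2:ℝ) * qNC α i z) • Cq α i

lemma hasF_S (z : PhaseSpace) :
    HasFDerivAt (fun v => ∑ i : Fin 3, (qNC α i v) ^ 2) (CS α z) z := by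
  unfold CS
  apply HasFDerivAt.fun_sum
  intro i _
  have h := (hasF_q α i z).mul (hasF_q α i z)
  have e1 : (fun v => qNC α i v ^ 2) = fun v => qNC α i v * qNC α i v := by
    funext v; ring
  rw [e1, two_mul, add_smul]
  exact h

lemma hasF_H (m k : ℝ) (z : PhaseSpace) (hY : Ync α z ≠ 0) :
    HasFDerivAt (Hnc α lam m k)
      ((1/(2*m)) • (∑ i : Fin 3, ((2:ℝ) * pNC lam i z) • Cp lam i)
        - k • ((-((Ync α z) ^ 2)⁻¹) • ((1 / (2 * Ync α z)) • CS α z))) z := by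
  have hS : (∑ i : Fin 3, (qNC α i z) ^ 2) ≠ 0 := by
    intro h
    exact hY (by simp [Ync, h])
  have hP2 : HasFDerivAt (fun v => ∑ i : Fin 3, (pNC lam i v) ^ 2)
      (∑ i : Fin 3, ((2:ℝ) * pNC lam i z) • Cp lam i) z := by
    apply HasFDerivAt.fun_sum
    intro i _
    have h := (hasF_p lam i z).mul (hasF_p lam i z)
    have e1 : (fun v => pNC lam i v ^ 2) = fun v => pNC lam i v * pNC lam i v := by
      funext v; ring
    rw [e1, two_mul, add_smul]
    exact h
  have hsqrt : HasFDerivAt (Ync α) ((1 / (2 * Ync α z)) • CS α z) z := by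
    have h1 := Real.hasDerivAt_sqrt hS
    exact h1.comp_hasFDerivAt z (hasF_S α z)
  have hinv : HasFDerivAt (fun v => (Ync α v)⁻¹)
      ((-((Ync α z) ^ 2)⁻¹) • ((1 / (2 * Ync α z)) • CS α z)) z := by
    have h2 := (hasDerivAt_inv hY).comp_hasFDerivAt z hsqrt
    exact h2
  have hH : Hnc α lam m k = fun v =>
      (1/(2*m)) * ∑ i : Fin 3, (pNC lam i v) ^ 2 - k * (Ync α v)⁻¹ := by
    funext v; rw [Hnc]; ring
  rw [hH]
  exact (hP2.const_mul _).sub (hinv.const_mul k)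

lemma pdQ_H (m k : ℝ) (ν : Fin 3) (z : PhaseSpace) (hY : Ync α z ≠ 0) :
    pdQ (Hnc α lam m k) ν z =
      (1/(2*m)) * (∑ j : Fin 3, pNC lam j z * lam j ν)
        + k * qNC α ν z / (Ync α z) ^ 3 := by
  rw [pdQ, (hasF_H α lam m k z hY).fderiv]
  simp only [ContinuousLinearMap.sub_apply, ContinuousLinearMap.smul_apply,
    ContinuousLinearMap.sum_apply, CS, Cq_dq, Cp_dq, smul_eq_mul]
  fin_cases ν <;> (simp [Fin.sum_univ_three]; field_simp)

lemma pdP_H (m k : ℝ) (ν : Fin 3) (z : PhaseSpace) (hY : Ync α z ≠ 0) :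
    pdP (Hnc α lam m k) ν z =
      (1/m) * pNC lam ν z
        - k / (2 * (Ync α z) ^ 3) * (∑ j : Fin 3, qNC α j z * α j ν) := by
  rw [pdP, (hasF_H α lam m k z hY).fderiv]
  simp only [ContinuousLinearMap.sub_apply, ContinuousLinearMap.smul_apply,
    ContinuousLinearMap.sum_apply, CS, Cq_dp, Cp_dp, smul_eq_mul]
  fin_cases ν <;> (simp [Fin.sum_univ_three]; field_simp; ring)

end Aux3
/-- Under conditions (C1) and (C3), at every point with `Y ≠ 0` where (C2) holds,
each component of the angular momentum `L' = q' × p'` Poisson-commutes with the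
noncommutative Kepler Hamiltonian: `{H', L'_i}_nc = 0`. -/
theorem stmt3 (α lam : Matrix (Fin 3) (Fin 3) ℝ)
    (hα : ∀ i j, α j i = - α i j) (hlam : ∀ i j, lam j i = - lam i j)
    (m k : ℝ) (hm : 0 < m)
    (hθ : ∀ ν, θnc α lam ν ≠ 0)
    (h1 : CondC1 α lam) (h3 : CondC3 α lam) :
    ∀ z : PhaseSpace, Ync α z ≠ 0 → CondC2 α lam z →
      ∀ i : Fin 3, ncBracket (θnc α lam) (Hnc α lam m k) (Lnc α lam i) z = 0 := by
  intro z hY h2 i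
  -- key pointwise facts from C2
  have hP : ∀ j κ : Fin 3, pNC lam j z * lam κ j = 0 := by
    intro j κ
    have h := (h2 j κ κ).2.2.2
    have hκκ : lam κ κ = 0 := by have := hlam κ κ; linarith
    rw [hκκ] at h
    simp only [mul_zero, zero_mul, neg_zero] at h
    rcases mul_eq_zero.mp h with h' | h'
    · exact h'
    · exact absurd h' (hθ κ)
  have hQ : ∀ j κ : Fin 3, qNC α j z * α κ j = 0 := by
    intro j κ
    have h := (h2 κ j κ).2.1
    have hκκ : α κ κ = 0 := by have := hα κ κ; linarith
    rw [hκκ] at h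
    have h'' : qNC α j z * α κ j * θnc α lam κ = 0 := by linear_combination h
    rcases mul_eq_zero.mp h'' with h' | h'
    · exact h'
    · exact absurd h' (hθ κ)
  -- simplify the Hamiltonian derivatives
  have e1 : ∀ ν, pdP (Hnc α lam m k) ν z = (1/m) * pNC lam ν z := by
    intro ν
    rw [pdP_H α lam m k ν z hY]
    have hs : ∑ j : Fin 3, qNC α j z * α j ν = 0 := by
      apply Finset.sum_eq_zero
      intro j _
      rw [hα ν j, mul_neg, hQ j ν, neg_zero]
    rw [hs, mul_zero, sub_zero]
  have e2 : ∀ ν, pdQ (Hnc α lam m k) ν z = k * qNC α ν z / (Ync α z) ^ 3 := by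
    intro ν
    rw [pdQ_H α lam m k ν z hY]
    have hs : ∑ j : Fin 3, pNC lam j z * lam j ν = 0 := by
      apply Finset.sum_eq_zero
      intro j _
      rw [hlam ν j, mul_neg, hP j ν, neg_zero]
    rw [hs, mul_zero, zero_add]
  -- θ-transfer keys
  have keyP : ∀ a b : Fin 3, pNC lam a z * pNC lam b z * θnc α lam a
      = pNC lam a z * pNC lam b z * θnc α lam b := by
    intro a b
    simp only [θnc, Fin.sum_univ_three]
    linear_combination (1/4) * (α 0 a * pNC lam b z * hP a 0
      + α 1 a * pNC lam b z * hP a 1 + α 2 a * pNC lam b z * hP a 2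
      - α 0 b * pNC lam a z * hP b 0 - α 1 b * pNC lam a z * hP b 1
      - α 2 b * pNC lam a z * hP b 2)
  have keyQ : ∀ a b : Fin 3, qNC α a z * qNC α b z * θnc α lam a
      = qNC α a z * qNC α b z * θnc α lam b := by
    intro a b
    simp only [θnc, Fin.sum_univ_three]
    linear_combination (1/4) * (lam 0 a * qNC α b z * hQ a 0
      + lam 1 a * qNC α b z * hQ a 1 + lam 2 a * qNC α b z * hQ a 2
      - lam 0 b * qNC α a z * hQ b 0 - lam 1 b * qNC α a z * hQ b 1
      - lam 2 b * qNC α a z * hQ b 2)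
  -- simplify products with the angular-momentum derivatives
  have e3 : ∀ ν, pdP (Hnc α lam m k) ν z * pdQ (Lnc α lam i) ν z
      = (1/m) * (pNC lam ν z * ∑ h : Fin 3, eps i ν h * pNC lam h z) := by
    intro ν
    rw [e1 ν, pdQ_L]
    have hz : pNC lam ν z * ∑ j : Fin 3, ∑ h : Fin 3,
        eps i j h * qNC α j z * lam h ν = 0 := by
      rw [Finset.mul_sum]
      apply Finset.sum_eq_zero; intro j _
      rw [Finset.mul_sum]
      apply Finset.sum_eq_zero; intro h _
      linear_combination eps i j h * qNC α j z * hP ν h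
    linear_combination (1/(2*m)) * hz
  have e4 : ∀ ν, pdQ (Hnc α lam m k) ν z * pdP (Lnc α lam i) ν z
      = k / (Ync α z) ^ 3 * (qNC α ν z * ∑ j : Fin 3, eps i j ν * qNC α j z) := by
    intro ν
    rw [e2 ν, pdP_L]
    have hz : qNC α ν z * ∑ j : Fin 3, ∑ h : Fin 3,
        eps i j h * α j ν * pNC lam h z = 0 := by
      rw [Finset.mul_sum]
      apply Finset.sum_eq_zero; intro j _
      rw [Finset.mul_sum]
      apply Finset.sum_eq_zero; intro h _
      linear_combination eps i j h * pNC lam h z * hQ ν j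
    linear_combination (-(k / (2 * (Ync α z) ^ 3))) * hz
  -- the two vanishing sums
  have SP : ∑ ν : Fin 3, (θnc α lam ν)⁻¹
      * (pNC lam ν z * ∑ h : Fin 3, eps i ν h * pNC lam h z) = 0 := by
    rw [Fin.sum_univ_three]
    fin_cases i
    · norm_num [eps, Fin.sum_univ_three]
      field_simp [hθ 0, hθ 1, hθ 2]
      first
      | linear_combination pNC lam 1 z * pNC lam 2 z * keyP 1 2
      | linear_combination keyP 1 2
      | linear_combination -keyP 1 2
      | linear_combination θnc α lam 1 * keyP 1 2
      | linear_combination θnc α lam 2 * keyP 1 2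
      | linear_combination -(θnc α lam 1 * keyP 1 2)
      | linear_combination -(θnc α lam 2 * keyP 1 2)
    · norm_num [eps, Fin.sum_univ_three]
      field_simp [hθ 0, hθ 1, hθ 2]
      first
      | linear_combination pNC lam 0 z * pNC lam 2 z * keyP 0 2
      | linear_combination keyP 0 2
      | linear_combination -keyP 0 2
      | linear_combination θnc α lam 0 * keyP 0 2
      | linear_combination θnc α lam 2 * keyP 0 2
      | linear_combination -(θnc α lam 0 * keyP 0 2)
      | linear_combination -(θnc α lam 2 * keyP 0 2)
    · norm_num [eps, Fin.sum_univ_three]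
      field_simp [hθ 0, hθ 1, hθ 2]
      first
      | linear_combination pNC lam 0 z * pNC lam 1 z * keyP 0 1
      | linear_combination keyP 0 1
      | linear_combination -keyP 0 1
      | linear_combination θnc α lam 0 * keyP 0 1
      | linear_combination θnc α lam 1 * keyP 0 1
      | linear_combination -(θnc α lam 0 * keyP 0 1)
      | linear_combination -(θnc α lam 1 * keyP 0 1)
  have SQ : ∑ ν : Fin 3, (θnc α lam ν)⁻¹
      * (qNC α ν z * ∑ j : Fin 3, eps i j ν * qNC α j z) = 0 := by
    rw [Fin.sum_univ_three]
    fin_cases i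
    · norm_num [eps, Fin.sum_univ_three]
      field_simp [hθ 0, hθ 1, hθ 2]
      first
      | linear_combination pNC lam 1 z * pNC lam 2 z * keyQ 1 2
      | linear_combination keyQ 1 2
      | linear_combination -keyQ 1 2
      | linear_combination θnc α lam 1 * keyQ 1 2
      | linear_combination θnc α lam 2 * keyQ 1 2
      | linear_combination -(θnc α lam 1 * keyQ 1 2)
      | linear_combination -(θnc α lam 2 * keyQ 1 2)
    · norm_num [eps, Fin.sum_univ_three]
      field_simp [hθ 0, hθ 1, hθ 2]
      first
      | linear_combination pNC lam 0 z * pNC lam 2 z * keyQ 0 2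
      | linear_combination keyQ 0 2
      | linear_combination -keyQ 0 2
      | linear_combination θnc α lam 0 * keyQ 0 2
      | linear_combination θnc α lam 2 * keyQ 0 2
      | linear_combination -(θnc α lam 0 * keyQ 0 2)
      | linear_combination -(θnc α lam 2 * keyQ 0 2)
    · norm_num [eps, Fin.sum_univ_three]
      field_simp [hθ 0, hθ 1, hθ 2]
      first
      | linear_combination pNC lam 0 z * pNC lam 1 z * keyQ 0 1
      | linear_combination keyQ 0 1
      | linear_combination -keyQ 0 1
      | linear_combination θnc α lam 0 * keyQ 0 1
      | linear_combination θnc α lam 1 * keyQ 0 1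
      | linear_combination -(θnc α lam 0 * keyQ 0 1)
      | linear_combination -(θnc α lam 1 * keyQ 0 1)
  -- conclusion
  rw [ncBracket]
  simp only [e3, e4]
  rw [Fin.sum_univ_three] at SP SQ ⊢
  linear_combination (1/m) * SP - (k / (Ync α z) ^ 3) * SQ
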